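/- Let G be a compact topological group (e.g. a compact Lie group) and H a closed subgroup. If H is conjugate in G to a subgroup H' with H' ⊆ H, then H' = H. (That is, a closed subgroup of a compact group is never conjugate to a proper subgroup of itself.) -/

import Mathlib

open Filter Topology

/-- A closed subgroup of a compact topological group is never conjugate to a
proper subgroup of itself: if `H` is conjugate (by `g`) to `H' ⊆ H`, then `H' = H`. -/
theorem closed_subgroup_not_conjugate_to_proper_subgroup
    {G : Type*} [Group G] [TopologicalSpace G] [IsTopologicalGroup G] [CompactSpace G]
    (H H' : Subgroup G) (hH : IsClosed (H : Set G))
    (g : G) (hconj : Subgroup.map (MulAut.conj g).toMonoidHom H = H')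
    (hle : H' ≤ H) : H' = H := by
  refine le_antisymm hle ?_
  have hmaps : ∀ a ∈ H, g * a * g⁻¹ ∈ H := by
    intro a ha
    apply hle
    rw [← hconj]
    exact ⟨a, ha, by simp [MulAut.conj]⟩
  intro h hh
  suffices hkey : g⁻¹ * h * g ∈ H by
    rw [← hconj]
    refine ⟨g⁻¹ * h * g, hkey, ?_⟩
    simp [MulAut.conj]
    group
  have hpow : ∀ k : ℕ, g ^ k * h * (g ^ k)⁻¹ ∈ H := by
    intro k
    induction k with
    | zero => simpa using hh
    | succ n ih =>
      have h2 := hmaps _ ih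
      have : g ^ (n + 1) * h * (g ^ (n + 1))⁻¹ = g * (g ^ n * h * (g ^ n)⁻¹) * g⁻¹ := by
        group
      rw [this]
      exact h2
  set U : Ultrafilter ℕ := Ultrafilter.of Filter.atTop with hU
  have hUle : ↑U ≤ (Filter.atTop : Filter ℕ) := Ultrafilter.of_le _
  obtain ⟨x, -, hx⟩ := isCompact_univ.ultrafilter_le_nhds (U.map fun n : ℕ => g ^ n)
    (by simp)
  have htend : Filter.Tendsto (fun n : ℕ => g ^ n) ↑U (𝓝 x) := hx
  set S : Set G := Set.range (fun k : ℕ => g ^ k) with hS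
  have stepA : ∀ m : ℕ, (g ^ m)⁻¹ * x ∈ closure S := by
    intro m
    apply mem_closure_of_tendsto (tendsto_const_nhds.mul htend)
    filter_upwards [hUle (Filter.eventually_ge_atTop m)] with n hn
    refine ⟨n - m, ?_⟩
    have hnm : g ^ n = g ^ m * g ^ (n - m) := by
      rw [← pow_add, Nat.add_sub_cancel' hn]
    simp only [hnm, inv_mul_cancel_left]
  have stepB : g⁻¹ ∈ closure S := by
    have h1 : Filter.Tendsto (fun m : ℕ => (g ^ (m + 1))⁻¹ * x) ↑U (𝓝 g⁻¹) := by
      have h2 : Filter.Tendsto (fun m : ℕ => g⁻¹ * ((g ^ m)⁻¹ * x)) ↑U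
          (𝓝 (g⁻¹ * (x⁻¹ * x))) :=
        tendsto_const_nhds.mul (htend.inv.mul tendsto_const_nhds)
      simp only [inv_mul_cancel, mul_one] at h2
      convert h2 using 2 with m
      rw [pow_succ, mul_inv_rev, mul_assoc]
    have := isClosed_closure.mem_of_tendsto h1
      (Filter.Eventually.of_forall fun m => stepA (m + 1))
    simpa using this
  have hcont : Continuous (fun y : G => y * h * y⁻¹) := by continuity
  have himg : (fun y : G => y * h * y⁻¹) '' S ⊆ (H : Set G) := by
    rintro _ ⟨_, ⟨k, rfl⟩, rfl⟩
    exact hpow k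
  have h3 : g⁻¹ * h * (g⁻¹)⁻¹ ∈ closure ((fun y : G => y * h * y⁻¹) '' S) :=
    (image_closure_subset_closure_image hcont) ⟨g⁻¹, stepB, rfl⟩
  have h4 : g⁻¹ * h * g ∈ closure (H : Set G) := by
    have := closure_mono himg h3
    simpa using this
  rwa [hH.closure_eq] at h4
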